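/- Let σ be a fixed-point-free permutation of Fin n and let G_σ be the bipartite graph with a_i adjacent to b_j iff j = i or j = σ(i). If i lies in a cycle of σ of length k, then the connected component of a_i in G_σ has exactly 2k vertices, namely {a_{σ^m(i)} : 0 ≤ m < k} ∪ {b_{σ^m(i)} : 0 ≤ m < k}. -/

import Mathlib

/-- The bipartite graph `G_σ` on `Fin n ⊕ Fin n`:
`a_i = Sum.inl i` is adjacent to `b_j = Sum.inr j` iff `j = i` or `j = σ i`. -/
def Gsigma (n : ℕ) (σ : Equiv.Perm (Fin n)) : SimpleGraph (Fin n ⊕ Fin n) where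
  Adj v w :=
    match v, w with
    | Sum.inl i, Sum.inr j => j = i ∨ j = σ i
    | Sum.inr j, Sum.inl i => j = i ∨ j = σ i
    | _, _ => False
  symm := by
    constructor
    intro v w h
    cases v <;> cases w <;> simp_all
  loopless := by
    constructor
    intro v h
    cases v <;> simp_all

theorem Gsigma_component_of_cycle (n : ℕ) (σ : Equiv.Perm (Fin n))
    (hσ : ∀ i, σ i ≠ i) (i : Fin n) (k : ℕ) (hk : 0 < k)
    (hki : (σ ^ k) i = i) (hmin : ∀ m, 0 < m → m < k → (σ ^ m) i ≠ i) :
    ((Gsigma n σ).connectedComponentMk (Sum.inl i)).supp =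
      (fun m : ℕ => (Sum.inl ((σ ^ m) i) : Fin n ⊕ Fin n)) '' (Set.Iio k) ∪
      (fun m : ℕ => (Sum.inr ((σ ^ m) i) : Fin n ⊕ Fin n)) '' (Set.Iio k) ∧
    (((Gsigma n σ).connectedComponentMk (Sum.inl i)).supp).ncard = 2 * k := by
  set G := Gsigma n σ with hG
  -- periodicity
  have hper : ∀ m : ℕ, (σ ^ (m + k)) i = (σ ^ m) i := by
    intro m
    rw [pow_add, Equiv.Perm.mul_apply, hki]
  have hmod : ∀ m : ℕ, (σ ^ m) i = (σ ^ (m % k)) i := by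
    intro m
    induction m using Nat.strong_induction_on with
    | _ m ih =>
      by_cases h : m < k
      · rw [Nat.mod_eq_of_lt h]
      · push_neg at h
        have h1 : m - k + k = m := Nat.sub_add_cancel h
        have := hper (m - k)
        rw [h1] at this
        have heq : (m - k) % k = m % k := (Nat.mod_eq_sub_mod h).symm
        rw [this, ih (m - k) (by omega), heq]
  -- injectivity of exponents below k
  have hinj : ∀ a b, a < k → b < k → (σ ^ a) i = (σ ^ b) i → a = b := by
    have key : ∀ a b, a ≤ b → b < k → (σ ^ a) i = (σ ^ b) i → a = b := by
      intro a b hab hbk h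
      by_contra hne
      have hba : (σ ^ (b - a)) i = i := by
        have h2 : (σ ^ a) ((σ ^ (b - a)) i) = (σ ^ a) i := by
          rw [← Equiv.Perm.mul_apply, ← pow_add, Nat.add_sub_cancel' hab, h]
        exact (σ ^ a).injective h2
      exact hmin (b - a) (by omega) (by omega) hba
    intro a b ha hb h
    rcases le_total a b with hab | hab
    · exact key a b hab hb h
    · exact (key b a hab ha h.symm).symm
  -- reachability of all inl (σ^m i)
  have hadj1 : ∀ m : ℕ, G.Adj (Sum.inl ((σ ^ m) i)) (Sum.inr ((σ ^ m) i)) := by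
    intro m
    show _ = _ ∨ _
    exact Or.inl rfl
  have hadj2 : ∀ m : ℕ, G.Adj (Sum.inl ((σ ^ m) i)) (Sum.inr ((σ ^ (m + 1)) i)) := by
    intro m
    show _ = _ ∨ _
    right
    rw [pow_succ', Equiv.Perm.mul_apply]
  have hreach : ∀ m : ℕ, G.Reachable (Sum.inl i) (Sum.inl ((σ ^ m) i)) := by
    intro m
    induction m with
    | zero =>
      simp only [pow_zero, Equiv.Perm.one_apply]
      exact SimpleGraph.Reachable.refl _
    | succ m ih =>
      refine ih.trans ?_
      have := ((hadj2 m).toWalk.concat ((hadj1 (m + 1)).symm)).reachable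
      exact this
  have hreach' : ∀ m : ℕ, G.Reachable (Sum.inl i) (Sum.inr ((σ ^ m) i)) :=
    fun m => (hreach m).trans (hadj1 m).toWalk.reachable
  -- The target set
  set S : Set (Fin n ⊕ Fin n) :=
    (fun m : ℕ => (Sum.inl ((σ ^ m) i) : Fin n ⊕ Fin n)) '' (Set.Iio k) ∪
    (fun m : ℕ => (Sum.inr ((σ ^ m) i) : Fin n ⊕ Fin n)) '' (Set.Iio k) with hS
  -- closure of S under adjacency
  have hclosed : ∀ v w, G.Adj v w → v ∈ S → w ∈ S := by
    intro v w hadj hv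
    rcases hv with ⟨m, hm, rfl⟩ | ⟨m, hm, rfl⟩
    · -- v = inl (σ^m i); w must be inr j with j = σ^m i or σ^(m+1) i
      match w with
      | Sum.inr j =>
        rcases hadj with h | h
        · exact Or.inr ⟨m, hm, by rw [h]⟩
        · refine Or.inr ⟨(m + 1) % k, Nat.mod_lt _ hk, ?_⟩
          simp only
          rw [← hmod (m + 1), h, pow_succ', Equiv.Perm.mul_apply]
      | Sum.inl j => exact absurd hadj (by exact id)
    · match w with
      | Sum.inl j =>
        rcases hadj with h | h
        · exact Or.inl ⟨m, hm, congrArg Sum.inl h⟩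
        · -- σ j = σ^m i, so j = σ^(m+k-1) i
          have hj : j = (σ ^ (m + k - 1)) i := by
            apply σ.injective
            rw [← h, ← Equiv.Perm.mul_apply, ← pow_succ']
            have : m + k - 1 + 1 = m + k := by omega
            rw [this, hper]
          refine Or.inl ⟨(m + k - 1) % k, Nat.mod_lt _ hk, ?_⟩
          simp only
          rw [← hmod, ← hj]
      | Sum.inr j => exact absurd hadj (by exact id)
  -- supp = S
  have hsupp : ((Gsigma n σ).connectedComponentMk (Sum.inl i)).supp = S := by
    ext v
    rw [SimpleGraph.ConnectedComponent.mem_supp_iff,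
      SimpleGraph.ConnectedComponent.eq]
    constructor
    · intro h
      have hwalks : ∀ (u v : Fin n ⊕ Fin n), G.Walk u v → u ∈ S → v ∈ S := by
        intro u v w
        induction w with
        | nil => exact id
        | cons ha _ ih => exact fun hu => ih (hclosed _ _ ha hu)
      obtain ⟨w⟩ := h.symm
      exact hwalks _ _ w (Or.inl ⟨0, hk, by simp⟩)
    · intro hv
      rcases hv with ⟨m, _, rfl⟩ | ⟨m, _, rfl⟩
      · exact (hreach m).symm
      · exact (hreach' m).symm
  refine ⟨hsupp, ?_⟩
  rw [hsupp, hS]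
  have hIio : (Set.Iio k).Finite := Set.finite_Iio k
  have hinj1 : Set.InjOn (fun m : ℕ => (Sum.inl ((σ ^ m) i) : Fin n ⊕ Fin n)) (Set.Iio k) := by
    intro a ha b hb h
    exact hinj a b ha hb (Sum.inl.inj h)
  have hinj2 : Set.InjOn (fun m : ℕ => (Sum.inr ((σ ^ m) i) : Fin n ⊕ Fin n)) (Set.Iio k) := by
    intro a ha b hb h
    exact hinj a b ha hb (Sum.inr.inj h)
  rw [Set.ncard_union_eq ?_ (hIio.image _) (hIio.image _)]
  · rw [Set.ncard_image_of_injOn hinj1, Set.ncard_image_of_injOn hinj2]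
    have : (Set.Iio k).ncard = k := by
      rw [← Nat.card_coe_set_eq, Nat.card_eq_card_toFinset]
      simp
    omega
  · rw [Set.disjoint_left]
    rintro x ⟨a, _, rfl⟩ ⟨b, _, h⟩
    cases h
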